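/- For every t ∈ ℂ with Re t ≥ 0, Im t ≤ 0 and t ≠ 1, one has the strict inequality |t|·|ξ(t)| < |t² − 1|^{3/2}. (Equivalently, |ξ(t)/w(t)| < 1 where w(t) = (t²−1)^{3/2}/t is the ratio (ξ')²/ξ''.) -/

import Mathlib

open Complex Real

/-- The branch `R(t) = √(t-1)·√(t+1)` with principal complex square roots. -/
noncomputable def Rb (t : ℂ) : ℂ := (t - 1) ^ ((1 : ℂ)/2) * (t + 1) ^ ((1 : ℂ)/2)

/-- `ξ(t) = (1/2)(t·R(t) − Log(t + R(t)))` with the principal logarithm. -/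
noncomputable def xi (t : ℂ) : ℂ := (1/2 : ℂ) * (t * Rb t - Complex.log (t + Rb t))

lemma half_cpow_sq (z : ℂ) : (z ^ ((1:ℂ)/2)) ^ 2 = z := by
  rcases eq_or_ne z 0 with rfl | hz
  · rw [Complex.zero_cpow (by norm_num)]; ring
  · rw [sq, ← Complex.cpow_add _ _ hz]; norm_num

lemma Rb_sq (s : ℂ) : Rb s ^ 2 = s ^ 2 - 1 := by
  rw [Rb, mul_pow, half_cpow_sq, half_cpow_sq]; ring

lemma abs_half_cpow (z : ℂ) : ‖z ^ ((1:ℂ)/2)‖ = Real.sqrt ‖z‖ := by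
  have h : ((1:ℂ)/2) = (((1:ℝ)/2 : ℝ) : ℂ) := by norm_num
  rw [h, Complex.norm_cpow_real, Real.sqrt_eq_rpow]

lemma abs_Rb (s : ℂ) : ‖Rb s‖ =
    Real.sqrt ‖s-1‖ * Real.sqrt ‖s+1‖ := by
  rw [Rb, norm_mul, abs_half_cpow, abs_half_cpow]

lemma add_Rb_mem_slitPlane {s : ℂ} (h : 0 ≤ s.re) : s + Rb s ∈ Complex.slitPlane := by
  have huv : (s + Rb s) * (s - Rb s) = 1 := by linear_combination -(Rb_sq s)
  have hu : s + Rb s ≠ 0 := by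
    intro h0; rw [h0, zero_mul] at huv; exact zero_ne_one huv
  by_contra hns
  rw [Complex.mem_slitPlane_iff] at hns
  push_neg at hns
  obtain ⟨h1, h2⟩ := hns
  set x := (s + Rb s).re with hx
  have hux : s + Rb s = (x : ℂ) := Complex.ext rfl (by simpa using h2)
  have hxne : x ≠ 0 := by
    intro h0; apply hu; rw [hux, h0, Complex.ofReal_zero]
  have hxneg : x < 0 := lt_of_le_of_ne h1 hxne
  rw [hux] at huv
  have hv : s - Rb s = (x:ℂ)⁻¹ := (inv_eq_of_mul_eq_one_right huv).symm
  have h2s : (2:ℂ) * s = (x:ℂ) + (x:ℂ)⁻¹ := by rw [← hv, ← hux]; ring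
  have hre2 : 2 * s.re = x + x⁻¹ := by
    have := congrArg Complex.re h2s
    push_cast at this
    simpa using this
  have hxinv : x⁻¹ < 0 := inv_lt_zero.mpr hxneg
  linarith


lemma Rb_ne_zero {s : ℂ} (h1 : s - 1 ∈ Complex.slitPlane) (h2 : s + 1 ∈ Complex.slitPlane) :
    Rb s ≠ 0 := by
  have a2 := half_cpow_sq (s - 1)
  have b2 := half_cpow_sq (s + 1)
  refine mul_ne_zero (fun h0 => ?_) (fun h0 => ?_)
  · exact Complex.slitPlane_ne_zero h1 (by rw [← a2, h0]; ring)
  · exact Complex.slitPlane_ne_zero h2 (by rw [← b2, h0]; ring)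

lemma hasDerivAt_xi {s : ℂ} (h1 : s - 1 ∈ Complex.slitPlane)
    (h2 : s + 1 ∈ Complex.slitPlane) (hre : 0 ≤ s.re) :
    HasDerivAt xi (Rb s) s := by
  set a := (s - 1) ^ ((1:ℂ)/2) with ha
  set b := (s + 1) ^ ((1:ℂ)/2) with hb
  have ha2 : a ^ 2 = s - 1 := half_cpow_sq _
  have hb2 : b ^ 2 = s + 1 := half_cpow_sq _
  have ha0 : a ≠ 0 := fun h0 => Complex.slitPlane_ne_zero h1 (by rw [← ha2, h0]; ring)
  have hb0 : b ≠ 0 := fun h0 => Complex.slitPlane_ne_zero h2 (by rw [← hb2, h0]; ring)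
  set D : ℂ := (1/2) * a⁻¹ * b + (1/2) * a * b⁻¹ with hD
  have hexp : ((1:ℂ)/2 - 1) = -(1/2) := by norm_num
  have hda : HasDerivAt (fun z : ℂ => (z - 1) ^ ((1:ℂ)/2)) ((1/2) * a⁻¹) s := by
    have h := ((hasDerivAt_id s).sub_const (1:ℂ)).cpow_const (c := (1:ℂ)/2) (by simpa using h1)
    simp only [id_eq] at h
    convert h using 1
    rw [show ((1:ℂ)/2 - 1) = -(1/2) by norm_num, Complex.cpow_neg, ← ha]
    ring
  have hdb : HasDerivAt (fun z : ℂ => (z + 1) ^ ((1:ℂ)/2)) ((1/2) * b⁻¹) s := by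
    have h := ((hasDerivAt_id s).add_const (1:ℂ)).cpow_const (c := (1:ℂ)/2) (by simpa using h2)
    simp only [id_eq] at h
    convert h using 1
    rw [show ((1:ℂ)/2 - 1) = -(1/2) by norm_num, Complex.cpow_neg, ← hb]
    ring
  have hRb : HasDerivAt Rb D s := by
    have h := hda.mul hdb
    show HasDerivAt (fun z : ℂ => (z - 1) ^ ((1:ℂ)/2) * (z + 1) ^ ((1:ℂ)/2)) D s
    refine h.congr_deriv ?_
    rw [hD, ← ha, ← hb]; ring
  have hmul : HasDerivAt (fun z : ℂ => z * Rb z) (1 * Rb s + s * D) s :=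
    (hasDerivAt_id s).mul hRb
  have hslit : s + Rb s ∈ Complex.slitPlane := add_Rb_mem_slitPlane hre
  have hlog : HasDerivAt (fun z : ℂ => Complex.log (z + Rb z)) ((1 + D) / (s + Rb s)) s :=
    ((hasDerivAt_id s).add hRb).clog hslit
  have total : HasDerivAt (fun z : ℂ => (1/2 : ℂ) * (z * Rb z - Complex.log (z + Rb z)))
      ((1/2 : ℂ) * ((1 * Rb s + s * D) - (1 + D) / (s + Rb s))) s :=
    (hmul.sub hlog).const_mul _
  have hRbs : Rb s = a * b := by rw [Rb, ← ha, ← hb]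
  have hab0 : a * b ≠ 0 := mul_ne_zero ha0 hb0
  have habs : a^2 * b^2 = s^2 - 1 := by linear_combination (s+1)*ha2 + a^2*hb2
  have hD2 : D = s / (a * b) := by
    have h_a := mul_inv_cancel₀ ha0
    have h_b := mul_inv_cancel₀ hb0
    rw [hD, eq_div_iff hab0]
    linear_combination (1/2*b^2) * h_a + (1/2*a^2) * h_b + (1/2) * ha2 + (1/2) * hb2
  have key : ((1/2 : ℂ) * ((1 * Rb s + s * D) - (1 + D) / (s + Rb s))) = Rb s := by
    rw [hRbs, hD2, one_mul]
    have hsum0' : s + a * b ≠ 0 := by rw [← hRbs]; exact Complex.slitPlane_ne_zero hslit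
    have hfrac : (1 + s/(a*b)) / (s + a*b) = 1/(a*b) := by
      rw [div_eq_div_iff hsum0' hab0]; field_simp; ring
    rw [hfrac]
    field_simp
    linear_combination -habs
  rw [← key]
  exact total

lemma hasDerivAt_sqrt_one_sub_sq {x : ℝ} (hx : x ∈ Set.Ioo (-1:ℝ) 1) :
    HasDerivAt (fun y : ℝ => Real.sqrt (1 - y^2)) (-x / Real.sqrt (1 - x^2)) x := by
  have h2 : (1:ℝ) - x^2 ≠ 0 := by nlinarith [hx.1, hx.2]
  have h := (Real.hasDerivAt_sqrt h2).comp x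
    (((hasDerivAt_pow 2 x).const_sub 1))
  refine h.congr_deriv ?_
  have hpos : 0 < Real.sqrt (1 - x^2) := Real.sqrt_pos.mpr (by nlinarith [hx.1, hx.2])
  field_simp
  ring

lemma arccos_ge {x : ℝ} (h0 : 0 ≤ x) (h1 : x ≤ 1) :
    x * Real.sqrt (1 - x^2) ≤ Real.arccos x := by
  set A : ℝ → ℝ := fun y => Real.arccos y - y * Real.sqrt (1 - y^2) with hA
  have hderiv : ∀ y ∈ Set.Ioo (0:ℝ) 1, HasDerivAt A (-2 * Real.sqrt (1 - y^2)) y := by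
    intro y hy
    have h1y : (1:ℝ) - y^2 ≠ 0 := by nlinarith [hy.1, hy.2]
    have hsq := hasDerivAt_sqrt_one_sub_sq (x := y) ⟨by linarith [hy.1], hy.2⟩
    have harc := Real.hasDerivAt_arccos (by linarith [hy.1] : y ≠ -1) (ne_of_lt hy.2)
    have h := harc.sub ((hasDerivAt_id y).mul hsq)
    refine h.congr_deriv ?_
    have hpos : 0 < Real.sqrt (1 - y^2) := Real.sqrt_pos.mpr (by nlinarith [hy.1, hy.2])
    have hs2 : Real.sqrt (1 - y^2) ^ 2 = 1 - y^2 := Real.sq_sqrt (by nlinarith [hy.1, hy.2])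
    field_simp
    simp only [id_eq]
    nlinarith [hs2]
  have hcont : ContinuousOn A (Set.Icc 0 1) := by
    apply ContinuousOn.sub Real.continuous_arccos.continuousOn
    exact (continuous_id.mul ((continuous_const.sub (continuous_pow 2)).sqrt)).continuousOn
  have hanti : AntitoneOn A (Set.Icc 0 1) := by
    apply antitoneOn_of_deriv_nonpos (convex_Icc 0 1) hcont
    · intro y hy
      rw [interior_Icc] at hy
      exact ((hderiv y hy).differentiableAt).differentiableWithinAt
    · intro y hy
      rw [interior_Icc] at hy
      rw [(hderiv y hy).deriv]
      have : 0 ≤ Real.sqrt (1 - y^2) := Real.sqrt_nonneg _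
      nlinarith
  have h10 : A 1 = 0 := by
    simp [hA, Real.arccos_one]
  have := hanti (Set.mem_Icc.mpr ⟨h0, h1⟩) (Set.mem_Icc.mpr ⟨zero_le_one, le_refl 1⟩) h1
  rw [h10] at this
  simpa [hA, sub_nonneg] using this

lemma arccos_le {x : ℝ} (h0 : 0 ≤ x) (h1 : x ≤ 1) :
    Real.arccos x ≤ x * Real.sqrt (1 - x^2) + 2 * (1 - x) * Real.sqrt (1 - x^2) := by
  set B : ℝ → ℝ := fun y =>
    2 * (1 - y) * Real.sqrt (1 - y^2) + y * Real.sqrt (1 - y^2) - Real.arccos y with hB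
  have hderiv : ∀ y ∈ Set.Ioo (0:ℝ) 1,
      HasDerivAt B (-2 * y * (1 - y) / Real.sqrt (1 - y^2)) y := by
    intro y hy
    have h1y : (0:ℝ) < 1 - y^2 := by nlinarith [hy.1, hy.2]
    have hpos : 0 < Real.sqrt (1 - y^2) := Real.sqrt_pos.mpr h1y
    have hs2 : Real.sqrt (1 - y^2) ^ 2 = 1 - y^2 := Real.sq_sqrt h1y.le
    have hsq := hasDerivAt_sqrt_one_sub_sq (x := y) ⟨by linarith [hy.1], hy.2⟩
    have harc := Real.hasDerivAt_arccos (by linarith [hy.1] : y ≠ -1) (ne_of_lt hy.2)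
    have h := ((((hasDerivAt_id y).const_sub 1).const_mul 2).mul hsq).add
      ((hasDerivAt_id y).mul hsq) |>.sub harc
    refine h.congr_deriv ?_
    field_simp
    simp only [id_eq]
    nlinarith [hs2]
  have hcont : ContinuousOn B (Set.Icc 0 1) := by
    have hsq : Continuous fun y : ℝ => Real.sqrt (1 - y^2) :=
      (continuous_const.sub (continuous_pow 2)).sqrt
    exact (((continuous_const.mul (continuous_const.sub continuous_id)).mul hsq).add
      (continuous_id.mul hsq)).sub Real.continuous_arccos |>.continuousOn
  have hanti : AntitoneOn B (Set.Icc 0 1) := by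
    apply antitoneOn_of_deriv_nonpos (convex_Icc 0 1) hcont
    · intro y hy
      rw [interior_Icc] at hy
      exact ((hderiv y hy).differentiableAt).differentiableWithinAt
    · intro y hy
      rw [interior_Icc] at hy
      rw [(hderiv y hy).deriv]
      have h1y : (0:ℝ) < 1 - y^2 := by nlinarith [hy.1, hy.2]
      have hpos : 0 < Real.sqrt (1 - y^2) := Real.sqrt_pos.mpr h1y
      apply div_nonpos_of_nonpos_of_nonneg _ hpos.le
      nlinarith [hy.1, hy.2]
  have h10 : B 1 = 0 := by
    simp [hB, Real.arccos_one]
  have := hanti (Set.mem_Icc.mpr ⟨h0, h1⟩) (Set.mem_Icc.mpr ⟨zero_le_one, le_refl 1⟩) h1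
  rw [h10] at this
  simp only [hB, sub_nonneg] at this
  linarith [this]

lemma cpow_half_of_neg {y : ℝ} (hy : y < 0) :
    ((y:ℂ)) ^ ((1:ℂ)/2) = (Real.sqrt (-y) : ℂ) * Complex.I := by
  have hy0 : (y:ℂ) ≠ 0 := Complex.ofReal_ne_zero.mpr hy.ne
  rw [Complex.cpow_def_of_ne_zero hy0]
  have hlog : Complex.log (y:ℂ) = (Real.log (-y) : ℂ) + (Real.pi : ℂ) * Complex.I := by
    simp only [Complex.log, Complex.arg_ofReal_of_neg hy, Complex.norm_real,
      Real.norm_eq_abs, abs_of_neg hy]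
  rw [hlog]
  have : ((Real.log (-y) : ℂ) + (Real.pi : ℂ) * Complex.I) * ((1:ℂ)/2)
      = ((Real.log (-y) / 2 : ℝ) : ℂ) + ((Real.pi/2 : ℝ) : ℂ) * Complex.I := by
    push_cast; ring
  rw [this, Complex.exp_add, Complex.exp_mul_I, ← Complex.ofReal_exp,
    ← Complex.ofReal_cos, ← Complex.ofReal_sin]
  rw [Real.cos_pi_div_two, Real.sin_pi_div_two]
  have hexp : Real.exp (Real.log (-y) / 2) = Real.sqrt (-y) := by
    rw [Real.sqrt_eq_rpow, Real.rpow_def_of_pos (by linarith)]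
    ring_nf
  rw [hexp]
  push_cast
  ring

lemma Rb_ofReal {x : ℝ} (h0 : 0 ≤ x) (h1 : x < 1) :
    Rb (x:ℂ) = (Real.sqrt (1 - x^2) : ℂ) * Complex.I := by
  rw [Rb]
  have e1 : ((x:ℂ) - 1) = (((x - 1 : ℝ)):ℂ) := by push_cast; ring
  have e2 : ((x:ℂ) + 1) = (((x + 1 : ℝ)):ℂ) := by push_cast; ring
  rw [e1, e2, cpow_half_of_neg (by linarith)]
  have e3 : ((x + 1 : ℝ):ℂ) ^ ((1:ℂ)/2) = (Real.sqrt (x+1) : ℂ) := by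
    have : ((1:ℂ)/2) = (((1/2 : ℝ)):ℂ) := by norm_num
    rw [this, ← Complex.ofReal_cpow (by linarith), ← Real.sqrt_eq_rpow]
  rw [e3]
  have e4 : Real.sqrt (-(x-1)) * Real.sqrt (x+1) = Real.sqrt (1 - x^2) := by
    rw [← Real.sqrt_mul (by linarith)]
    ring_nf
  rw [show (Real.sqrt (-(x-1)) : ℂ) * Complex.I * (Real.sqrt (x+1) : ℂ)
      = ((Real.sqrt (-(x-1)) * Real.sqrt (x+1) : ℝ) : ℂ) * Complex.I by push_cast; ring, e4]

lemma xi_ofReal {x : ℝ} (h0 : 0 ≤ x) (h1 : x < 1) :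
    xi (x:ℂ) = (((x * Real.sqrt (1 - x^2) - Real.arccos x)/2 : ℝ) : ℂ) * Complex.I := by
  have hRb := Rb_ofReal h0 h1
  have hsq : Real.sqrt (1 - x^2) ^ 2 = 1 - x^2 := Real.sq_sqrt (by nlinarith)
  set θ := Real.arccos x with hθ
  have hcos : Real.cos θ = x := Real.cos_arccos (by linarith) h1.le
  have hsin : Real.sin θ = Real.sqrt (1 - x^2) := by
    rw [hθ, Real.sin_arccos]
  have hz : (x:ℂ) + Rb (x:ℂ) = Complex.cos (θ:ℂ) + Complex.sin (θ:ℂ) * Complex.I := by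
    rw [hRb, ← Complex.ofReal_cos, ← Complex.ofReal_sin, hcos, hsin]
  have harg : Complex.arg ((x:ℂ) + Rb (x:ℂ)) = θ := by
    rw [hz]
    exact Complex.arg_cos_add_sin_mul_I ⟨by linarith [Real.arccos_nonneg x, Real.pi_pos],
      Real.arccos_le_pi x⟩
  have habs : ‖(x:ℂ) + Rb (x:ℂ)‖ = 1 := by
    rw [hz]
    exact Complex.norm_cos_add_sin_mul_I θ
  have hlog : Complex.log ((x:ℂ) + Rb (x:ℂ)) = (θ:ℂ) * Complex.I := by
    apply Complex.ext
    · rw [Complex.log_re, habs, Real.log_one]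
      simp
    · rw [Complex.log_im, harg]
      simp
  rw [xi, hlog, hRb]
  push_cast
  ring

lemma real_case {x : ℝ} (h0 : 0 ≤ x) (h1 : x < 1) :
    ‖(x:ℂ)‖ * ‖xi (x:ℂ)‖ <
      ‖(x:ℂ)^2 - 1‖ ^ ((3:ℝ)/2) := by
  have hge := arccos_ge h0 h1.le
  have hle := arccos_le h0 h1.le
  have hsq0 : (0:ℝ) < 1 - x^2 := by nlinarith
  have hsqrtpos : 0 < Real.sqrt (1 - x^2) := Real.sqrt_pos.mpr hsq0
  have habs_xi : ‖xi (x:ℂ)‖ = (Real.arccos x - x * Real.sqrt (1-x^2))/2 := by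
    rw [xi_ofReal h0 h1, norm_mul, Complex.norm_I, mul_one, Complex.norm_real, Real.norm_eq_abs,
      abs_of_nonpos (by linarith)]
    ring
  have habs_t : ‖(x:ℂ)‖ = x := by rw [Complex.norm_real, Real.norm_eq_abs, _root_.abs_of_nonneg h0]
  have habs_sq : ‖(x:ℂ)^2 - 1‖ = 1 - x^2 := by
    have e : ((x:ℂ)^2 - 1) = (((x^2 - 1 : ℝ)):ℂ) := by push_cast; ring
    rw [e, Complex.norm_real, Real.norm_eq_abs, abs_of_nonpos (by nlinarith)]
    ring
  rw [habs_xi, habs_t, habs_sq]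
  have hrhs : (1 - x^2) ^ ((3:ℝ)/2) = (1-x^2) * Real.sqrt (1-x^2) := by
    rw [show (3:ℝ)/2 = 1 + 1/2 by norm_num, Real.rpow_add hsq0, Real.rpow_one,
      ← Real.sqrt_eq_rpow]
  rw [hrhs]
  nlinarith [mul_le_mul_of_nonneg_left hle h0,
    mul_pos (by linarith : (0:ℝ) < 1 - x) hsqrtpos]

lemma xi_one : xi 1 = 0 := by
  have hRb1 : Rb 1 = 0 := by
    rw [Rb, sub_self, Complex.zero_cpow (by norm_num : ((1:ℂ)/2) ≠ 0), zero_mul]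
  rw [xi, hRb1, mul_zero, add_zero, Complex.log_one, sub_zero, mul_zero]

lemma complex_case {t : ℂ} (hre : 0 ≤ t.re)
    (hcase : t.im < 0 ∨ (t.im = 0 ∧ 1 < t.re)) :
    ‖t‖ * ‖xi t‖ < ‖t^2 - 1‖ ^ ((3:ℝ)/2) := by
  set σ : ℝ → ℂ := fun τ => 1 + (τ:ℂ) * (t - 1) with hσ
  have hσ0 : σ 0 = 1 := by simp [hσ]
  have hσ1 : σ 1 = t := by simp [hσ]
  have hne1 : t ≠ 1 := by
    rintro rfl
    rcases hcase with h | h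
    · simp at h
    · simp [Complex.one_re] at h
  -- membership facts
  have hsre : ∀ τ ∈ Set.Icc (0:ℝ) 1, 0 ≤ (σ τ).re := by
    intro τ hτ
    simp only [hσ, Complex.add_re, Complex.one_re, Complex.mul_re, Complex.ofReal_re,
      Complex.ofReal_im, Complex.sub_re, Complex.sub_im, Complex.one_re, Complex.one_im]
    nlinarith [hτ.1, hτ.2, mul_nonneg hτ.1 hre]
  have hslit1 : ∀ τ ∈ Set.Ioc (0:ℝ) 1, σ τ - 1 ∈ Complex.slitPlane := by
    intro τ hτ
    rw [Complex.mem_slitPlane_iff]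
    have he : σ τ - 1 = (τ:ℂ) * (t - 1) := by rw [hσ]; ring
    rcases hcase with h | h
    · right
      rw [he]
      simp only [Complex.mul_im, Complex.ofReal_re, Complex.ofReal_im, Complex.sub_im,
        Complex.one_im, Complex.sub_re, Complex.one_re]
      have : τ * t.im < 0 := mul_neg_of_pos_of_neg hτ.1 h
      intro hcon
      nlinarith
    · left
      rw [he]
      simp only [Complex.mul_re, Complex.ofReal_re, Complex.ofReal_im, Complex.sub_im,
        Complex.one_im, Complex.sub_re, Complex.one_re]
      nlinarith [hτ.1, h.2]
  have hslit2 : ∀ τ ∈ Set.Icc (0:ℝ) 1, σ τ + 1 ∈ Complex.slitPlane := by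
    intro τ hτ
    rw [Complex.mem_slitPlane_iff]
    left
    simp only [hσ, Complex.add_re, Complex.one_re, Complex.mul_re, Complex.ofReal_re,
      Complex.ofReal_im, Complex.sub_re, Complex.sub_im, Complex.one_im]
    nlinarith [hτ.1, hτ.2, mul_nonneg hτ.1 hre]
  -- derivative on the open interval
  have hderiv : ∀ τ ∈ Set.Ioo (0:ℝ) 1,
      HasDerivAt (fun τ : ℝ => xi (σ τ)) ((t - 1) * Rb (σ τ)) τ := by
    intro τ hτ
    have hτ' : τ ∈ Set.Ioc (0:ℝ) 1 := ⟨hτ.1, hτ.2.le⟩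
    have hτ'' : τ ∈ Set.Icc (0:ℝ) 1 := ⟨hτ.1.le, hτ.2.le⟩
    have haff : HasDerivAt (fun z : ℂ => 1 + z * (t - 1)) (t - 1) (τ:ℂ) := by
      simpa using ((hasDerivAt_id ((τ:ℝ):ℂ)).mul_const (t - 1)).const_add 1
    have hxi := (hasDerivAt_xi (hslit1 τ hτ') (hslit2 τ hτ'') (hsre τ hτ'')).comp
      ((τ:ℝ):ℂ) haff
    have := hxi.comp_ofReal
    refine this.congr_deriv ?_
    ring
  -- continuity on the closed interval
  have hσcont : Continuous σ := by
    rw [hσ]; fun_prop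
  have hcRb : ContinuousOn (fun τ : ℝ => Rb (σ τ)) (Set.Icc 0 1) := by
    intro τ hτ
    apply ContinuousWithinAt.mul
    · apply ContinuousAt.continuousWithinAt
      have hin : ContinuousAt (fun x : ℝ => σ x - 1) τ :=
        (hσcont.sub continuous_const).continuousAt
      refine ContinuousAt.comp (f := fun x : ℝ => σ x - 1)
        (g := fun z : ℂ => z ^ ((1:ℂ)/2)) ?_ hin
      apply Complex.continuousAt_cpow_const_of_re_pos _ (by norm_num)
      rcases hcase with h | h
      · rcases eq_or_lt_of_le hτ.1 with h0 | h0
        · left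
          simp [hσ, ← h0]
        · right
          show (σ τ - 1).im ≠ 0
          have he : σ τ - 1 = (τ:ℂ) * (t - 1) := by rw [hσ]; ring
          rw [he]
          simp only [Complex.mul_im, Complex.ofReal_re, Complex.ofReal_im, Complex.sub_im,
            Complex.one_im, Complex.sub_re, Complex.one_re]
          have : τ * t.im < 0 := mul_neg_of_pos_of_neg h0 h
          intro hcon; nlinarith
      · left
        show 0 ≤ (σ τ - 1).re
        have he : σ τ - 1 = (τ:ℂ) * (t - 1) := by rw [hσ]; ring
        rw [he]
        simp only [Complex.mul_re, Complex.ofReal_re, Complex.ofReal_im, Complex.sub_im,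
          Complex.one_im, Complex.sub_re, Complex.one_re]
        nlinarith [hτ.1, h.2]
    · apply ContinuousAt.continuousWithinAt
      have hin : ContinuousAt (fun x : ℝ => σ x + 1) τ :=
        (hσcont.add continuous_const).continuousAt
      refine ContinuousAt.comp (f := fun x : ℝ => σ x + 1)
        (g := fun z : ℂ => z ^ ((1:ℂ)/2)) ?_ hin
      apply Complex.continuousAt_cpow_const_of_re_pos _ (by norm_num)
      left
      have := hslit2 τ hτ
      rw [Complex.mem_slitPlane_iff] at this
      rcases this with h | h
      · exact h.le
      · exact le_of_lt (by
          have h2 := hsre τ hτ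
          simp only [Complex.add_re, Complex.one_re]
          linarith)
  have hcxi : ContinuousOn (fun τ : ℝ => xi (σ τ)) (Set.Icc 0 1) := by
    apply ContinuousOn.mul continuousOn_const
    apply ContinuousOn.sub (hσcont.continuousOn.mul hcRb)
    intro τ hτ
    have hslit : σ τ + Rb (σ τ) ∈ Complex.slitPlane := add_Rb_mem_slitPlane (hsre τ hτ)
    exact ContinuousAt.comp_continuousWithinAt (g := Complex.log)
      (f := fun x : ℝ => σ x + Rb (σ x)) (continuousAt_clog hslit)
      (hσcont.continuousOn.add hcRb τ hτ)
  -- integrability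
  have hint : IntervalIntegrable (fun τ : ℝ => (t - 1) * Rb (σ τ)) MeasureTheory.volume 0 1 := by
    apply ContinuousOn.intervalIntegrable
    rw [Set.uIcc_of_le zero_le_one]
    exact continuousOn_const.mul hcRb
  -- FTC
  have hFTC : ∫ τ in (0:ℝ)..1, (t - 1) * Rb (σ τ) = xi t := by
    rw [intervalIntegral.integral_eq_sub_of_hasDeriv_right_of_le zero_le_one hcxi
      (fun τ hτ => (hderiv τ hτ).hasDerivWithinAt) hint, hσ1, hσ0, xi_one, sub_zero]
  set p := ‖t - 1‖ with hp
  set q := ‖t + 1‖ with hq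
  set M := max 2 q with hM
  have hppos : 0 < p := by
    rw [hp]; exact norm_pos_iff.mpr (sub_ne_zero.mpr hne1)
  have hq1 : 1 ≤ q := by
    have h1 : (t+1).re ≤ ‖t+1‖ := Complex.re_le_norm (t+1)
    rw [← hq] at h1
    simp only [Complex.add_re, Complex.one_re] at h1
    linarith
  have hMq : q ≤ M := le_max_right _ _
  have hMpos : (0:ℝ) < M := lt_of_lt_of_le one_pos (hq1.trans hMq)
  have hbound : ∀ τ ∈ Set.uIoc (0:ℝ) 1,
      ‖(t - 1) * Rb (σ τ)‖ ≤ p * Real.sqrt (p * M) := by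
    intro τ hτ'
    have hτ : τ ∈ Set.Ioc (0:ℝ) 1 := by rwa [Set.uIoc_of_le zero_le_one] at hτ'
    rw [norm_mul, ← hp]
    have h1 : ‖σ τ - 1‖ ≤ p := by
      have he : σ τ - 1 = (τ:ℂ) * (t - 1) := by rw [hσ]; ring
      rw [he, norm_mul, Complex.norm_real, Real.norm_eq_abs, _root_.abs_of_nonneg hτ.1.le, ← hp]
      nlinarith [hτ.1.le, hτ.2, hppos.le]
    have h2 : ‖σ τ + 1‖ ≤ M := by
      have he : σ τ + 1 = ((1 - τ : ℝ):ℂ) * 2 + (τ:ℂ) * (t + 1) := by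
        rw [hσ]; push_cast; ring
      have hle := norm_add_le (((1 - τ : ℝ):ℂ) * 2) ((τ:ℂ) * (t + 1))
      rw [← he] at hle
      refine hle.trans ?_
      rw [norm_mul, norm_mul, Complex.norm_real, Complex.norm_real, Real.norm_eq_abs, Real.norm_eq_abs,
        _root_.abs_of_nonneg (by linarith [hτ.2] : (0:ℝ) ≤ 1 - τ),
        _root_.abs_of_nonneg hτ.1.le, Complex.norm_two, ← hq]
      have e2 : (2:ℝ) ≤ M := le_max_left _ _
      nlinarith [hτ.1.le, hτ.2, hMq, e2]
    have habsRb : ‖Rb (σ τ)‖ ≤ Real.sqrt (p * M) := by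
      rw [abs_Rb, ← Real.sqrt_mul (norm_nonneg _)]
      exact Real.sqrt_le_sqrt
        (mul_le_mul h1 h2 (norm_nonneg _) hppos.le)
    exact mul_le_mul_of_nonneg_left habsRb hppos.le
  have hxi_le : ‖xi t‖ ≤ p * Real.sqrt (p * M) := by
    have h := intervalIntegral.norm_integral_le_of_norm_le_const hbound
    rw [hFTC] at h
    simpa using h
  have habs2 : ‖t^2 - 1‖ = p * q := by
    rw [show t^2 - 1 = (t - 1) * (t + 1) by ring, norm_mul, ← hp, ← hq]
  have hr2 : ‖t‖ ^ 2 + 1 ≤ q ^ 2 := by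
    have h1 := Complex.sq_norm t
    have h2 := Complex.sq_norm (t + 1)
    rw [← hq] at h2
    simp only [Complex.normSq_apply, Complex.add_re, Complex.add_im, Complex.one_re,
      Complex.one_im] at h1 h2
    nlinarith [hre]
  set r := ‖t‖ with hr
  have hrpos : 0 ≤ r := norm_nonneg t
  have hsq_lt : r^2 * M < q^3 := by
    rcases le_total q 2 with h | h
    · rw [hM, max_eq_left h]
      nlinarith [hq1, hr2, sq_nonneg (3*q - 4), mul_nonneg (sub_nonneg.mpr hq1) (sub_nonneg.mpr h),
        mul_nonneg (mul_nonneg (sub_nonneg.mpr hq1) (sub_nonneg.mpr h)) (sub_nonneg.mpr hq1)]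
    · rw [hM, max_eq_right h]
      nlinarith [hr2, hq1]
  have hRHS : ‖t^2 - 1‖ ^ ((3:ℝ)/2) = (p * q) * Real.sqrt (p * q) := by
    rw [habs2, show (3:ℝ)/2 = 1 + 1/2 by norm_num,
      Real.rpow_add (by positivity), Real.rpow_one, ← Real.sqrt_eq_rpow]
  rw [hRHS]
  have hLHS_le : r * ‖xi t‖ ≤ r * (p * Real.sqrt (p * M)) :=
    mul_le_mul_of_nonneg_left hxi_le hrpos
  refine lt_of_le_of_lt hLHS_le ?_
  have hL : (r * (p * Real.sqrt (p * M)))^2 = r^2 * p^2 * (p * M) := by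
    rw [mul_pow, mul_pow, Real.sq_sqrt (by positivity)]; ring
  have hR : ((p * q) * Real.sqrt (p * q))^2 = (p * q)^3 := by
    rw [mul_pow, Real.sq_sqrt (by positivity)]; ring
  have hsq : (r * (p * Real.sqrt (p * M)))^2 < ((p * q) * Real.sqrt (p * q))^2 := by
    rw [hL, hR]
    nlinarith [mul_lt_mul_of_pos_left hsq_lt (pow_pos hppos 3)]
  exact lt_of_pow_lt_pow_left₀ 2 (by positivity) hsq

theorem stmt7 (t : ℂ) (hre : 0 ≤ t.re) (him : t.im ≤ 0) (ht : t ≠ 1) :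
    ‖t‖ * ‖xi t‖ <
      ‖t ^ 2 - 1‖ ^ ((3 : ℝ)/2) := by
  rcases lt_or_eq_of_le him with h | h
  · exact complex_case hre (Or.inl h)
  · have him0 : t.im = 0 := h
    have hx : t = ((t.re : ℝ) : ℂ) := Complex.ext rfl (by simp [him0])
    rcases lt_trichotomy t.re 1 with hlt | heq | hgt
    · rw [hx]
      exact real_case hre hlt
    · exact absurd (Complex.ext heq (by simpa using him0)) ht
    · exact complex_case hre (Or.inr ⟨him0, hgt⟩)
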